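/- arXiv:1201.2040 — 2 statements merged into one kernel-verified Lean document; each statement's English description precedes it below -/
import Mathlib

section
/- Let g be a finite-dimensional Lie algebra over a field K, let A be a unital associative K-algebra, and let X ↦ L⁰_X be a Lie algebra homomorphism of g into the Lie algebra Der(A) of all derivations of A. Then there exists a unique operation of g in the universal differential calculus Ω(A) such that L_X(a) = L⁰_X(a) for every a ∈ A. -/
open scoped TensorProduct DirectSum

/-- A differential making an ℕ-graded algebra into a graded differential algebra:
`d` is homogeneous of degree `+1`, squares to zero, and is an antiderivation
(graded Leibniz rule). -/
structure IsGDA (K : Type) [Field K] (Ω : Type) [Ring Ω] [Algebra K Ω]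
    (𝒜 : ℕ → Submodule K Ω) (d : Ω →ₗ[K] Ω) : Prop where
  d_mem : ∀ (n : ℕ), ∀ a ∈ 𝒜 n, d a ∈ 𝒜 (n + 1)
  d_sq : ∀ a : Ω, d (d a) = 0
  leibniz : ∀ (n : ℕ) (a b : Ω), a ∈ 𝒜 n →
    d (a * b) = d a * b + ((-1 : K) ^ n) • (a * d b)

/-- An operation (in the sense of H. Cartan) of a Lie algebra `g` in a graded
differential algebra `Ω`: a linear family of degree `-1` antiderivations `i X`
satisfying the Cartan relation `[i X, L Y] = i ⁅X,Y⁆`, where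
`L Y = i Y ∘ d + d ∘ i Y`. -/
structure IsLieOperation (K : Type) [Field K] (g : Type) [LieRing g] [LieAlgebra K g]
    (Ω : Type) [Ring Ω] [Algebra K Ω] (𝒜 : ℕ → Submodule K Ω) (d : Ω →ₗ[K] Ω)
    (i : g →ₗ[K] Module.End K Ω) : Prop where
  i_mem : ∀ (X : g) (n : ℕ), ∀ a ∈ 𝒜 (n + 1), i X a ∈ 𝒜 n
  i_deg0 : ∀ (X : g), ∀ a ∈ 𝒜 0, i X a = 0
  antider : ∀ (X : g) (n : ℕ) (a b : Ω), a ∈ 𝒜 n →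
    i X (a * b) = i X a * b + ((-1 : K) ^ n) • (a * i X b)
  cartan : ∀ X Y : g,
    i X * ((d : Module.End K Ω) * i Y + i Y * (d : Module.End K Ω))
      - ((d : Module.End K Ω) * i Y + i Y * (d : Module.End K Ω)) * i X = i ⁅X, Y⁆

/-- The graded differential envelope `Ω_gr(A)` of an ℕ-graded algebra `A`
(for `A` trivially graded in degree `0` this is the universal differential
calculus, i.e. the differential envelope `Ω(A)`), encoded by its universal
property: a graded differential algebra together with a degree preserving
algebra homomorphism `ι : A → W` such that every degree preserving algebra
homomorphism from `A` to a graded differential algebra extends uniquely to a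
homomorphism of graded differential algebras on `W`. -/
structure GDEnvelope (K : Type) [Field K] (A : Type) [Ring A] [Algebra K A]
    (𝒜 : ℕ → Submodule K A) where
  W : Type
  ringW : Ring W
  algW : Algebra K W
  grading : ℕ → Submodule K W
  gradedW : GradedAlgebra grading
  d : W →ₗ[K] W
  isGDA : IsGDA K W grading d
  ι : A →ₐ[K] W
  ι_grading : ∀ (n : ℕ), ∀ a ∈ 𝒜 n, ι a ∈ grading n
  univ : ∀ (Ω : Type) (_ : Ring Ω) (_ : Algebra K Ω) (ℬ : ℕ → Submodule K Ω)
    (_ : GradedAlgebra ℬ) (d' : Ω →ₗ[K] Ω), IsGDA K Ω ℬ d' →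
    ∀ (α : A →ₐ[K] Ω), (∀ (n : ℕ), ∀ a ∈ 𝒜 n, α a ∈ ℬ n) →
    ∃! Φ : W →ₐ[K] Ω, (∀ (n : ℕ), ∀ w ∈ grading n, Φ w ∈ ℬ n) ∧
      (∀ w, Φ (d w) = d' (Φ w)) ∧ (∀ a, Φ (ι a) = α a)

attribute [instance] GDEnvelope.ringW GDEnvelope.algW GDEnvelope.gradedW

/-- The trivial grading on an algebra `A`, concentrating everything in
degree `0`; the differential envelope `Ω(A)` of an ungraded algebra `A` is the
graded differential envelope of `A` with this grading. -/
def trivGrading (K : Type) [Field K] (A : Type) [Ring A] [Algebra K A] :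
    ℕ → Submodule K A := fun n => if n = 0 then ⊤ else ⊥

set_option linter.unusedVariables false
set_option linter.unusedSectionVars false
set_option maxHeartbeats 1000000
set_option synthInstance.maxHeartbeats 200000

namespace S0
variable {K W : Type} [Field K] [Ring W] [Algebra K W]
variable (𝒜 : ℕ → Submodule K W) [GradedAlgebra 𝒜]

noncomputable def eps : W →ₗ[K] W :=
  (DirectSum.toModule K ℕ W fun n => ((-1 : K) ^ n • (𝒜 n).subtype)) ∘ₗ
    (DirectSum.decomposeLinearEquiv 𝒜).toLinearMap

lemma eps_of_mem {n : ℕ} {a : W} (h : a ∈ 𝒜 n) : eps 𝒜 a = ((-1 : K) ^ n) • a := by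
  simp only [eps, LinearMap.coe_comp, Function.comp_apply, LinearEquiv.coe_coe,
    DirectSum.decomposeLinearEquiv_apply]
  rw [DirectSum.decompose_of_mem 𝒜 h, ← DirectSum.lof_eq_of K, DirectSum.toModule_lof]
  rfl

lemma eps_one : eps 𝒜 (1 : W) = 1 := by
  rw [eps_of_mem 𝒜 (SetLike.one_mem_graded 𝒜)]; simp

lemma eps_mul (x y : W) : eps 𝒜 (x * y) = eps 𝒜 x * eps 𝒜 y := by
  induction x using DirectSum.Decomposition.inductionOn 𝒜 with
  | zero => simp
  | @homogeneous m a =>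
    induction y using DirectSum.Decomposition.inductionOn 𝒜 with
    | zero => simp
    | @homogeneous n b =>
      rw [eps_of_mem 𝒜 a.2, eps_of_mem 𝒜 b.2,
        eps_of_mem 𝒜 (SetLike.mul_mem_graded a.2 b.2), pow_add, smul_mul_smul_comm]
    | add y₁ y₂ h1 h2 => rw [mul_add, map_add, h1, h2, map_add, mul_add]
  | add x₁ x₂ h1 h2 => rw [add_mul, map_add, h1, h2, map_add, add_mul]

/-- degree shift grading used in second component -/
def pre : ℕ → Submodule K W
  | 0 => ⊥
  | n + 1 => 𝒜 n

/-- The auxiliary triple algebra `W ⊕ W[-1] ⊕ W`. -/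
def TT (K W : Type) [Field K] [Ring W] [Algebra K W] (𝒜 : ℕ → Submodule K W) : Type := W × W × W

variable {𝒜}

def TT.mk (a b c : W) : TT K W 𝒜 := (a, b, c)
def TT.c1 (p : TT K W 𝒜) : W := (show W × W × W from p).1
def TT.c2 (p : TT K W 𝒜) : W := (show W × W × W from p).2.1
def TT.c3 (p : TT K W 𝒜) : W := (show W × W × W from p).2.2

variable (𝒜)

instance : AddCommGroup (TT K W 𝒜) := inferInstanceAs (AddCommGroup (W × W × W))
instance : Module K (TT K W 𝒜) := inferInstanceAs (Module K (W × W × W))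

variable {𝒜}

@[simp] lemma TT.c1_mk (a b c : W) : (TT.mk a b c : TT K W 𝒜).c1 = a := rfl
@[simp] lemma TT.c2_mk (a b c : W) : (TT.mk a b c : TT K W 𝒜).c2 = b := rfl
@[simp] lemma TT.c3_mk (a b c : W) : (TT.mk a b c : TT K W 𝒜).c3 = c := rfl
lemma TT.eta (p : TT K W 𝒜) : TT.mk p.c1 p.c2 p.c3 = p := rfl
@[simp] lemma TT.mk_add (a b c a' b' c' : W) :
    (TT.mk a b c + TT.mk a' b' c' : TT K W 𝒜) = TT.mk (a + a') (b + b') (c + c') := rfl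
@[simp] lemma TT.mk_smul (k : K) (a b c : W) :
    (k • TT.mk a b c : TT K W 𝒜) = TT.mk (k • a) (k • b) (k • c) := rfl
@[simp] lemma TT.c1_add (p q : TT K W 𝒜) : (p + q).c1 = p.c1 + q.c1 := rfl
@[simp] lemma TT.c2_add (p q : TT K W 𝒜) : (p + q).c2 = p.c2 + q.c2 := rfl
@[simp] lemma TT.c3_add (p q : TT K W 𝒜) : (p + q).c3 = p.c3 + q.c3 := rfl
@[simp] lemma TT.c1_smul (k : K) (p : TT K W 𝒜) : (k • p).c1 = k • p.c1 := rfl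
@[simp] lemma TT.c2_smul (k : K) (p : TT K W 𝒜) : (k • p).c2 = k • p.c2 := rfl
@[simp] lemma TT.c3_smul (k : K) (p : TT K W 𝒜) : (k • p).c3 = k • p.c3 := rfl
@[simp] lemma TT.c1_zero : (0 : TT K W 𝒜).c1 = 0 := rfl
@[simp] lemma TT.c2_zero : (0 : TT K W 𝒜).c2 = 0 := rfl
@[simp] lemma TT.c3_zero : (0 : TT K W 𝒜).c3 = 0 := rfl
@[simp] lemma TT.mk_zero : (TT.mk 0 0 0 : TT K W 𝒜) = 0 := rfl
lemma TT.ext {p q : TT K W 𝒜} (h1 : p.c1 = q.c1) (h2 : p.c2 = q.c2) (h3 : p.c3 = q.c3) :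
    p = q := by
  rw [← TT.eta p, ← TT.eta q, h1, h2, h3]

variable (𝒜)


noncomputable instance : Mul (TT K W 𝒜) :=
  ⟨fun p q => TT.mk (p.c1 * q.c1) (p.c2 * q.c1 + eps 𝒜 p.c1 * q.c2)
    (p.c3 * q.c1 + p.c1 * q.c3)⟩

instance : One (TT K W 𝒜) := ⟨TT.mk 1 0 0⟩

variable {𝒜}

lemma TT.mul_def (p q : TT K W 𝒜) :
    p * q = TT.mk (p.c1 * q.c1) (p.c2 * q.c1 + eps 𝒜 p.c1 * q.c2)
      (p.c3 * q.c1 + p.c1 * q.c3) := rfl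

lemma TT.one_def : (1 : TT K W 𝒜) = TT.mk 1 0 0 := rfl

variable (𝒜)

noncomputable instance : Ring (TT K W 𝒜) :=
  { (inferInstance : AddCommGroup (TT K W 𝒜)), (inferInstance : Mul (TT K W 𝒜)),
    (inferInstance : One (TT K W 𝒜)) with
    mul_assoc := fun p q r => by
      simp only [TT.mul_def, TT.c1_mk, TT.c2_mk, TT.c3_mk, eps_mul, map_add]
      apply TT.ext <;> simp only [TT.c1_mk, TT.c2_mk, TT.c3_mk, mul_assoc, mul_add, add_mul]
        <;> abel
    one_mul := fun p => by
      conv_rhs => rw [← TT.eta p]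
      rw [TT.mul_def, TT.one_def]
      apply TT.ext <;> simp [eps_one]
    mul_one := fun p => by
      conv_rhs => rw [← TT.eta p]
      rw [TT.mul_def, TT.one_def]
      apply TT.ext <;> simp
    left_distrib := fun p q r => by
      simp only [TT.mul_def, TT.c1_add, TT.c2_add, TT.c3_add]
      apply TT.ext <;> simp [mul_add] <;> abel
    right_distrib := fun p q r => by
      simp only [TT.mul_def, TT.c1_add, TT.c2_add, TT.c3_add]
      apply TT.ext <;> simp [add_mul, map_add] <;> abel
    zero_mul := fun p => by
      rw [TT.mul_def]
      apply TT.ext <;> simp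
    mul_zero := fun p => by
      rw [TT.mul_def]
      apply TT.ext <;> simp }

noncomputable instance : Algebra K (TT K W 𝒜) :=
  Algebra.ofModule
    (fun k p q => by
      rw [TT.mul_def, TT.mul_def]
      apply TT.ext <;> simp [smul_add, smul_mul_assoc])
    (fun k p q => by
      rw [TT.mul_def, TT.mul_def]
      apply TT.ext <;> simp [smul_add, mul_smul_comm])

lemma TT.algebraMap_def (k : K) :
    algebraMap K (TT K W 𝒜) k = TT.mk (algebraMap K W k) 0 0 := by
  rw [Algebra.algebraMap_eq_smul_one, Algebra.algebraMap_eq_smul_one (A := W), TT.one_def]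
  apply TT.ext <;> simp


/-- The grading on the triple algebra. -/
def Bgr (n : ℕ) : Submodule K (TT K W 𝒜) where
  carrier := {p | p.c1 ∈ 𝒜 n ∧ p.c2 ∈ pre 𝒜 n ∧ p.c3 ∈ 𝒜 n}
  add_mem' := fun {p q} hp hq => ⟨add_mem hp.1 hq.1, add_mem hp.2.1 hq.2.1, add_mem hp.2.2 hq.2.2⟩
  zero_mem' := ⟨zero_mem _, zero_mem _, zero_mem _⟩
  smul_mem' := fun k p hp => ⟨Submodule.smul_mem _ k hp.1, Submodule.smul_mem _ k hp.2.1,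
    Submodule.smul_mem _ k hp.2.2⟩

variable {𝒜}

lemma Bgr_mem_iff {n : ℕ} {p : TT K W 𝒜} :
    p ∈ Bgr 𝒜 n ↔ p.c1 ∈ 𝒜 n ∧ p.c2 ∈ pre 𝒜 n ∧ p.c3 ∈ 𝒜 n := Iff.rfl

lemma pre_mul_left {m n : ℕ} {b a : W} (hb : b ∈ pre 𝒜 m) (ha : a ∈ 𝒜 n) :
    b * a ∈ pre 𝒜 (m + n) := by
  cases m with
  | zero => rw [show b = 0 from hb]; simp [zero_mem]
  | succ k =>
    have h : k + 1 + n = (k + n) + 1 := by omega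
    rw [h]
    show b * a ∈ 𝒜 (k + n)
    exact SetLike.mul_mem_graded hb ha

lemma pre_mul_right {m n : ℕ} {a b : W} (ha : a ∈ 𝒜 m) (hb : b ∈ pre 𝒜 n) :
    a * b ∈ pre 𝒜 (m + n) := by
  cases n with
  | zero => rw [show b = 0 from hb]; simp [zero_mem]
  | succ k =>
    show a * b ∈ 𝒜 (m + k)
    exact SetLike.mul_mem_graded ha hb

instance : SetLike.GradedMonoid (Bgr 𝒜) where
  one_mem := ⟨SetLike.one_mem_graded _, zero_mem _, zero_mem _⟩
  mul_mem := fun {m n p q} hp hq => by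
    rw [TT.mul_def]
    refine ⟨?_, ?_, ?_⟩
    · exact SetLike.mul_mem_graded hp.1 hq.1
    · show _ + _ ∈ _
      refine add_mem (pre_mul_left hp.2.1 hq.1) ?_
      rw [eps_of_mem 𝒜 hp.1, smul_mul_assoc]
      exact Submodule.smul_mem _ _ (pre_mul_right hp.1 hq.2.1)
    · exact add_mem (SetLike.mul_mem_graded hp.2.2 hq.1)
        (SetLike.mul_mem_graded hp.1 hq.2.2)

variable (𝒜)

/-- inclusion of `𝒜 n` into `Bgr n` in the various slots -/
def incl1 (n : ℕ) : 𝒜 n →ₗ[K] Bgr 𝒜 n where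
  toFun x := ⟨TT.mk x 0 0, ⟨x.2, zero_mem _, zero_mem _⟩⟩
  map_add' x y := by ext <;> simp
  map_smul' k x := by ext <;> simp

def incl2 (n : ℕ) : 𝒜 n →ₗ[K] Bgr 𝒜 (n + 1) where
  toFun x := ⟨TT.mk 0 x 0, ⟨zero_mem _, x.2, zero_mem _⟩⟩
  map_add' x y := by ext <;> simp
  map_smul' k x := by ext <;> simp

def incl3 (n : ℕ) : 𝒜 n →ₗ[K] Bgr 𝒜 n where
  toFun x := ⟨TT.mk 0 0 x, ⟨zero_mem _, zero_mem _, x.2⟩⟩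
  map_add' x y := by ext <;> simp
  map_smul' k x := by ext <;> simp

noncomputable def f1 : (⨁ n, 𝒜 n) →ₗ[K] ⨁ n, Bgr 𝒜 n :=
  DirectSum.toModule K ℕ _ fun n => (DirectSum.lof K ℕ (fun m => Bgr 𝒜 m) n) ∘ₗ incl1 𝒜 n
noncomputable def f2 : (⨁ n, 𝒜 n) →ₗ[K] ⨁ n, Bgr 𝒜 n :=
  DirectSum.toModule K ℕ _ fun n => (DirectSum.lof K ℕ (fun m => Bgr 𝒜 m) (n + 1)) ∘ₗ incl2 𝒜 n
noncomputable def f3 : (⨁ n, 𝒜 n) →ₗ[K] ⨁ n, Bgr 𝒜 n :=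
  DirectSum.toModule K ℕ _ fun n => (DirectSum.lof K ℕ (fun m => Bgr 𝒜 m) n) ∘ₗ incl3 𝒜 n

/-- projections as linear maps -/
def pr1 : TT K W 𝒜 →ₗ[K] W := ⟨⟨TT.c1, fun p q => rfl⟩, fun k p => rfl⟩
def pr2 : TT K W 𝒜 →ₗ[K] W := ⟨⟨TT.c2, fun p q => rfl⟩, fun k p => rfl⟩
def pr3 : TT K W 𝒜 →ₗ[K] W := ⟨⟨TT.c3, fun p q => rfl⟩, fun k p => rfl⟩

noncomputable def decT : TT K W 𝒜 →ₗ[K] ⨁ n, Bgr 𝒜 n :=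
  f1 𝒜 ∘ₗ (DirectSum.decomposeLinearEquiv 𝒜).toLinearMap ∘ₗ pr1 𝒜
    + f2 𝒜 ∘ₗ (DirectSum.decomposeLinearEquiv 𝒜).toLinearMap ∘ₗ pr2 𝒜
    + f3 𝒜 ∘ₗ (DirectSum.decomposeLinearEquiv 𝒜).toLinearMap ∘ₗ pr3 𝒜

lemma coe_f1 (x : ⨁ n, 𝒜 n) :
    (DirectSum.coeAddMonoidHom (Bgr 𝒜) (f1 𝒜 x) : TT K W 𝒜)
      = TT.mk (DirectSum.coeAddMonoidHom 𝒜 x) 0 0 := by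
  induction x using DirectSum.induction_on with
  | zero => simp
  | of n x =>
    rw [← DirectSum.lof_eq_of K, f1, DirectSum.toModule_lof]
    simp only [LinearMap.coe_comp, Function.comp_apply, DirectSum.lof_eq_of,
      DirectSum.coeAddMonoidHom_of]
    rfl
  | add x y hx hy => simp only [map_add, hx, hy, TT.mk_add, add_zero]

lemma coe_f2 (x : ⨁ n, 𝒜 n) :
    (DirectSum.coeAddMonoidHom (Bgr 𝒜) (f2 𝒜 x) : TT K W 𝒜)
      = TT.mk 0 (DirectSum.coeAddMonoidHom 𝒜 x) 0 := by
  induction x using DirectSum.induction_on with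
  | zero => simp
  | of n x =>
    rw [← DirectSum.lof_eq_of K, f2, DirectSum.toModule_lof]
    simp only [LinearMap.coe_comp, Function.comp_apply, DirectSum.lof_eq_of,
      DirectSum.coeAddMonoidHom_of]
    rfl
  | add x y hx hy => simp only [map_add, hx, hy, TT.mk_add, add_zero]

lemma coe_f3 (x : ⨁ n, 𝒜 n) :
    (DirectSum.coeAddMonoidHom (Bgr 𝒜) (f3 𝒜 x) : TT K W 𝒜)
      = TT.mk 0 0 (DirectSum.coeAddMonoidHom 𝒜 x) := by
  induction x using DirectSum.induction_on with
  | zero => simp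
  | of n x =>
    rw [← DirectSum.lof_eq_of K, f3, DirectSum.toModule_lof]
    simp only [LinearMap.coe_comp, Function.comp_apply, DirectSum.lof_eq_of,
      DirectSum.coeAddMonoidHom_of]
    rfl
  | add x y hx hy => simp only [map_add, hx, hy, TT.mk_add, add_zero]


lemma decT_mk (a b c : W) :
    decT 𝒜 (TT.mk a b c) = f1 𝒜 (DirectSum.decompose 𝒜 a) + f2 𝒜 (DirectSum.decompose 𝒜 b)
      + f3 𝒜 (DirectSum.decompose 𝒜 c) := rfl

lemma decT_left_inv (p : TT K W 𝒜) :
    (DirectSum.coeAddMonoidHom (Bgr 𝒜)) (decT 𝒜 p) = p := by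
  conv_lhs => rw [← TT.eta p]
  rw [decT_mk, map_add, map_add, coe_f1, coe_f2, coe_f3]
  have h1 : (DirectSum.coeAddMonoidHom 𝒜) (DirectSum.decompose 𝒜 p.c1) = p.c1 :=
    (DirectSum.decompose 𝒜).symm_apply_apply _
  have h2 : (DirectSum.coeAddMonoidHom 𝒜) (DirectSum.decompose 𝒜 p.c2) = p.c2 :=
    (DirectSum.decompose 𝒜).symm_apply_apply _
  have h3 : (DirectSum.coeAddMonoidHom 𝒜) (DirectSum.decompose 𝒜 p.c3) = p.c3 :=
    (DirectSum.decompose 𝒜).symm_apply_apply _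
  rw [h1, h2, h3]
  apply TT.ext <;> simp

lemma decT_right_inv (y : ⨁ n, Bgr 𝒜 n) :
    decT 𝒜 ((DirectSum.coeAddMonoidHom (Bgr 𝒜)) y) = y := by
  induction y using DirectSum.induction_on with
  | zero => simp
  | of n q =>
    obtain ⟨p, hp⟩ := q
    rw [DirectSum.coeAddMonoidHom_of]
    show decT 𝒜 p = _
    conv_lhs => rw [← TT.eta p]
    rw [decT_mk]
    have e1 : DirectSum.decompose 𝒜 p.c1 = DirectSum.of _ n ⟨p.c1, hp.1⟩ :=
      DirectSum.decompose_of_mem 𝒜 hp.1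
    have e3 : DirectSum.decompose 𝒜 p.c3 = DirectSum.of _ n ⟨p.c3, hp.2.2⟩ :=
      DirectSum.decompose_of_mem 𝒜 hp.2.2
    rw [e1, e3]
    cases n with
    | zero =>
      have h2 : p.c2 = 0 := hp.2.1
      have e2 : DirectSum.decompose 𝒜 p.c2 = 0 := by rw [h2, DirectSum.decompose_zero]
      rw [e2, map_zero, add_zero]
      rw [← DirectSum.lof_eq_of K, f1, DirectSum.toModule_lof,
        ← DirectSum.lof_eq_of K (ι := ℕ) (M := fun n => 𝒜 n), f3, DirectSum.toModule_lof]
      simp only [LinearMap.coe_comp, Function.comp_apply, DirectSum.lof_eq_of]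
      rw [← map_add]
      congr 1
      apply Subtype.ext
      show (TT.mk p.c1 0 0 + TT.mk 0 0 p.c3 : TT K W 𝒜) = p
      rw [TT.mk_add, ← TT.eta p, h2]
      apply TT.ext <;> simp
    | succ m =>
      have e2 : DirectSum.decompose 𝒜 p.c2 = DirectSum.of _ m ⟨p.c2, hp.2.1⟩ :=
        DirectSum.decompose_of_mem 𝒜 hp.2.1
      rw [e2]
      rw [← DirectSum.lof_eq_of K, f1, DirectSum.toModule_lof,
        ← DirectSum.lof_eq_of K (ι := ℕ) (M := fun n => 𝒜 n), f2, DirectSum.toModule_lof,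
        ← DirectSum.lof_eq_of K (ι := ℕ) (M := fun n => 𝒜 n), f3, DirectSum.toModule_lof]
      simp only [LinearMap.coe_comp, Function.comp_apply, DirectSum.lof_eq_of]
      rw [← map_add, ← map_add]
      congr 1
      apply Subtype.ext
      show (TT.mk p.c1 0 0 + TT.mk 0 p.c2 0 + TT.mk 0 0 p.c3 : TT K W 𝒜) = p
      rw [TT.mk_add, TT.mk_add, ← TT.eta p]
      apply TT.ext <;> simp
  | add x y hx hy => rw [map_add, map_add, hx, hy]

noncomputable instance : GradedAlgebra (Bgr 𝒜) where
  decompose' := decT 𝒜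
  left_inv := decT_left_inv 𝒜
  right_inv := decT_right_inv 𝒜

section Diff

variable (d : W →ₗ[K] W)

/-- The differential on the triple algebra: `(a,b,c) ↦ (da, c - db, dc)`. -/
noncomputable def dT : TT K W 𝒜 →ₗ[K] TT K W 𝒜 :=
  { toFun := fun p => TT.mk (d p.c1) (p.c3 - d p.c2) (d p.c3)
    map_add' := fun p q => by
      simp only [TT.c1_add, TT.c2_add, TT.c3_add, map_add]
      apply TT.ext <;> simp <;> abel
    map_smul' := fun k p => by
      simp only [TT.c1_smul, TT.c2_smul, TT.c3_smul, map_smul, RingHom.id_apply]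
      apply TT.ext <;> simp [smul_sub] }

lemma dT_apply (p : TT K W 𝒜) :
    dT 𝒜 d p = TT.mk (d p.c1) (p.c3 - d p.c2) (d p.c3) := rfl

lemma neg_one_pow_smul_neg_one_pow_smul (n : ℕ) (x : W) :
    ((-1 : K) ^ n) • ((-1 : K) ^ n) • x = x := by
  rw [smul_smul, ← pow_add, Even.neg_one_pow ⟨n, rfl⟩, one_smul]

lemma isGDA_dT (hd : IsGDA K W 𝒜 d) : IsGDA K (TT K W 𝒜) (Bgr 𝒜) (dT 𝒜 d) where
  d_mem := by
    intro n p hp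
    rw [dT_apply]
    refine ⟨hd.d_mem n _ hp.1, ?_, hd.d_mem n _ hp.2.2⟩
    show p.c3 - d p.c2 ∈ 𝒜 n
    refine sub_mem hp.2.2 ?_
    cases n with
    | zero => rw [show p.c2 = 0 from hp.2.1, map_zero]; exact zero_mem _
    | succ m => exact hd.d_mem m _ hp.2.1
  d_sq := by
    intro p
    rw [dT_apply, dT_apply]
    apply TT.ext <;> simp [hd.d_sq]
  leibniz := by
    intro n p q hp
    have hone : ((-1 : K) ^ n) * ((-1 : K) ^ n) = 1 := by
      rw [← pow_add]; exact Even.neg_one_pow ⟨n, rfl⟩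
    have heps : eps 𝒜 p.c1 = ((-1 : K) ^ n) • p.c1 := eps_of_mem 𝒜 hp.1
    have hepsd : eps 𝒜 (d p.c1) = -(((-1 : K) ^ n) • d p.c1) := by
      rw [eps_of_mem 𝒜 (hd.d_mem n _ hp.1), pow_succ]
      simp [smul_smul, mul_comm]
    have hdb : d (p.c2 * q.c1) = d p.c2 * q.c1 - ((-1 : K) ^ n) • (p.c2 * d q.c1) := by
      cases n with
      | zero =>
        rw [show p.c2 = 0 from hp.2.1]
        simp
      | succ m =>
        rw [hd.leibniz m _ _ hp.2.1, pow_succ]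
        simp [smul_smul, mul_comm]
    have hda : d (p.c1 * q.c1) = d p.c1 * q.c1 + ((-1 : K) ^ n) • (p.c1 * d q.c1) :=
      hd.leibniz n _ _ hp.1
    have hdc : d (p.c3 * q.c1) = d p.c3 * q.c1 + ((-1 : K) ^ n) • (p.c3 * d q.c1) :=
      hd.leibniz n _ _ hp.2.2
    rw [TT.mul_def, dT_apply, dT_apply, dT_apply, TT.mul_def, TT.mul_def]
    simp only [TT.c1_mk, TT.c2_mk, TT.c3_mk, TT.mk_smul, TT.mk_add]
    apply TT.ext
    · simp only [TT.c1_mk, hda]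
    · simp only [TT.c2_mk]
      rw [map_add, hdb, heps, hepsd]
      simp only [smul_mul_assoc, map_smul]
      rw [hd.leibniz n _ _ hp.1]
      simp only [smul_add, smul_sub, sub_mul, mul_sub, mul_add, neg_mul, neg_smul,
        smul_mul_assoc, smul_smul, hone, one_smul]
      abel
    · simp only [TT.c3_mk]
      rw [map_add, hdc, hd.leibniz n _ _ hp.1, smul_add]
      abel

end Diff

section Helpers

variable {d : W →ₗ[K] W}

lemma antider_global (j : Module.End K W)
    (hj : ∀ (n : ℕ) (a b : W), a ∈ 𝒜 n → j (a * b) = j a * b + ((-1 : K) ^ n) • (a * j b)) :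
    ∀ w w', j (w * w') = j w * w' + eps 𝒜 w * j w' := by
  intro w w'
  induction w using DirectSum.Decomposition.inductionOn 𝒜 with
  | zero => simp
  | @homogeneous m a =>
    rw [hj m a w' a.2, eps_of_mem 𝒜 a.2, smul_mul_assoc]
  | add x y hx hy =>
    rw [add_mul, map_add, hx, hy, map_add, map_add, add_mul, add_mul]
    abel

lemma eps_commute (L : Module.End K W) (hL : ∀ n, ∀ a ∈ 𝒜 n, L a ∈ 𝒜 n) (w : W) :
    eps 𝒜 (L w) = L (eps 𝒜 w) := by
  induction w using DirectSum.Decomposition.inductionOn 𝒜 with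
  | zero => simp
  | @homogeneous m a =>
    rw [eps_of_mem 𝒜 (hL m a a.2), eps_of_mem 𝒜 a.2, map_smul]
  | add x y hx hy => rw [map_add, map_add, hx, hy, map_add, map_add]

lemma der_global (hd : IsGDA K W 𝒜 d) (j : Module.End K W)
    (hj : ∀ (n : ℕ) (a b : W), a ∈ 𝒜 n → j (a * b) = j a * b + ((-1 : K) ^ n) • (a * j b))
    (hmem : ∀ n, ∀ a ∈ 𝒜 (n + 1), j a ∈ 𝒜 n) (h0 : ∀ a ∈ 𝒜 0, j a = 0) :
    ∀ w w', d (j (w * w')) + j (d (w * w'))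
      = (d (j w) + j (d w)) * w' + w * (d (j w') + j (d w')) := by
  intro w w'
  induction w using DirectSum.Decomposition.inductionOn 𝒜 with
  | zero => simp
  | @homogeneous n a =>
    obtain ⟨a, ha⟩ := a
    show d (j (a * w')) + j (d (a * w')) = _
    rw [hj n a w' ha, hd.leibniz n a w' ha, map_add, map_add, map_smul, map_smul]
    cases n with
    | zero =>
      rw [hd.leibniz 0 a (j w') ha, hj 1 (d a) w' (hd.d_mem 0 a ha), hj 0 a (d w') ha,
        h0 a ha]
      simp only [pow_zero, one_smul, pow_one, neg_smul, zero_mul, map_zero, zero_add,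
        add_zero, mul_add, add_mul]
      abel
    | succ m =>
      rw [hd.leibniz m (j a) w' (hmem m a ha), hd.leibniz (m + 1) a (j w') ha,
        hj (m + 1 + 1) (d a) w' (hd.d_mem (m + 1) a ha), hj (m + 1) a (d w') ha]
      have h1 : ((-1 : K)) ^ (m + 1) = -((-1 : K) ^ m) := by rw [pow_succ]; ring
      have h2 : ((-1 : K)) ^ (m + 1 + 1) = (-1 : K) ^ m := by rw [pow_succ, pow_succ]; ring
      simp only [h1, h2, smul_add, neg_smul, smul_neg, neg_neg,
        neg_one_pow_smul_neg_one_pow_smul, mul_add, add_mul]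
      abel
  | add x y hx hy =>
    simp only [add_mul, map_add]
    rw [show ∀ A B C D : W, A + B + (C + D) = A + C + (B + D) from fun A B C D => by abel,
      hx, hy]
    simp only [add_mul]
    abel

end Helpers

section Main

variable {K A : Type} [Field K] [Ring A] [Algebra K A]
variable (E : GDEnvelope K A (trivGrading K A))

/-- first projection as an algebra hom -/
noncomputable def P1 : TT K E.W E.grading →ₐ[K] E.W where
  toFun := TT.c1
  map_one' := rfl
  map_mul' := fun p q => by
    show (p * q).c1 = p.c1 * q.c1
    rw [TT.mul_def, TT.c1_mk]
  map_zero' := rfl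
  map_add' := fun p q => rfl
  commutes' := fun k => by
    show (algebraMap K (TT K E.W E.grading) k).c1 = _
    rw [TT.algebraMap_def, TT.c1_mk]

noncomputable def alpha (D0 : Module.End K A) (hD0 : ∀ a b : A, D0 (a * b) = D0 a * b + a * D0 b) :
    A →ₐ[K] TT K E.W E.grading where
  toFun a := TT.mk (E.ι a) 0 (E.ι (D0 a))
  map_one' := by
    have hD01 : D0 (1 : A) = 0 := by
      have h := hD0 1 1
      rw [one_mul, mul_one, one_mul] at h
      have h2 : D0 1 + 0 = D0 1 + D0 1 := by rw [add_zero]; exact h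
      exact (add_left_cancel h2).symm
    rw [TT.one_def]
    apply TT.ext <;> simp [hD01]
  map_mul' x y := by
    rw [TT.mul_def]
    apply TT.ext <;> simp [hD0, map_add, map_mul]
  map_zero' := by apply TT.ext <;> simp
  map_add' x y := by apply TT.ext <;> simp
  commutes' k := by
    have hD01 : D0 (1 : A) = 0 := by
      have h := hD0 1 1
      rw [one_mul, mul_one, one_mul] at h
      have h2 : D0 1 + 0 = D0 1 + D0 1 := by rw [add_zero]; exact h
      exact (add_left_cancel h2).symm
    rw [TT.algebraMap_def]
    apply TT.ext
    · exact (E.ι).commutes k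
    · rfl
    · show E.ι (D0 (algebraMap K A k)) = 0
      rw [Algebra.algebraMap_eq_smul_one, map_smul, hD01, smul_zero, map_zero]

lemma main (D0 : Module.End K A) (hD0 : ∀ a b : A, D0 (a * b) = D0 a * b + a * D0 b) :
    ∃! j : Module.End K E.W,
      (∀ w w' : E.W, j (w * w') = j w * w' + eps E.grading w * j w') ∧
      (∀ n : ℕ, ∀ w ∈ E.grading (n + 1), j w ∈ E.grading n) ∧
      (∀ w ∈ E.grading 0, j w = 0) ∧
      (∀ w w' : E.W, E.d (j (w * w')) + j (E.d (w * w'))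
          = (E.d (j w) + j (E.d w)) * w' + w * (E.d (j w') + j (E.d w'))) ∧
      (∀ a : A, j (E.ι a) = 0) ∧
      (∀ a : A, E.d (j (E.ι a)) + j (E.d (E.ι a)) = E.ι (D0 a)) := by
  have hι0 : ∀ a : A, E.ι a ∈ E.grading 0 := fun a =>
    E.ι_grading 0 a (by simp [trivGrading])
  have hα : ∀ n : ℕ, ∀ a ∈ trivGrading K A n, alpha E D0 hD0 a ∈ Bgr E.grading n := by
    intro n a ha
    cases n with
    | zero => exact ⟨hι0 a, zero_mem _, hι0 _⟩
    | succ m =>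
      have : a = 0 := by simpa [trivGrading] using ha
      subst this
      rw [map_zero]
      exact zero_mem _
  obtain ⟨Φ, ⟨hΦdeg, hΦd, hΦι⟩, hΦuniq⟩ :=
    E.univ (TT K E.W E.grading) inferInstance inferInstance (Bgr E.grading) inferInstance
      (dT E.grading E.d) (isGDA_dT E.grading E.d E.isGDA) (alpha E D0 hD0) hα
  obtain ⟨Ψ, hΨ, hΨuniq⟩ := E.univ E.W inferInstance inferInstance E.grading inferInstance
    E.d E.isGDA E.ι E.ι_grading
  have h1 : (P1 E).comp Φ = AlgHom.id K E.W := by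
    have e1 : (P1 E).comp Φ = Ψ := by
      apply hΨuniq
      refine ⟨fun n w hw => (hΦdeg n w hw).1, fun w => ?_, fun a => ?_⟩
      · show (Φ (E.d w)).c1 = E.d (Φ w).c1
        rw [hΦd w, dT_apply, TT.c1_mk]
      · show (Φ (E.ι a)).c1 = E.ι a
        rw [hΦι a]
        rfl
    have e2 : AlgHom.id K E.W = Ψ := by
      apply hΨuniq
      exact ⟨fun n w hw => hw, fun w => rfl, fun a => rfl⟩
    rw [e1, e2]
  have hπ : ∀ w, (Φ w).c1 = w := fun w => DFunLike.congr_fun h1 w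
  set j : Module.End K E.W := (pr2 E.grading) ∘ₗ Φ.toLinearMap with hjdef
  have hjw : ∀ w, j w = (Φ w).c2 := fun w => rfl
  have hLw : ∀ w, (Φ w).c3 = E.d (j w) + j (E.d w) := by
    intro w
    have h := congrArg TT.c2 (hΦd w)
    rw [dT_apply, TT.c2_mk] at h
    have h2 : (Φ w).c3 - E.d ((Φ w).c2) = (Φ (E.d w)).c2 := h.symm
    rw [sub_eq_iff_eq_add] at h2
    rw [hjw, hjw, h2, add_comm]
  have prop1 : ∀ w w' : E.W, j (w * w') = j w * w' + eps E.grading w * j w' := by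
    intro w w'
    have h := congrArg TT.c2 (map_mul Φ w w')
    rw [TT.mul_def, TT.c2_mk, hπ w, hπ w'] at h
    exact h
  have prop2 : ∀ n : ℕ, ∀ w ∈ E.grading (n + 1), j w ∈ E.grading n :=
    fun n w hw => (hΦdeg (n + 1) w hw).2.1
  have prop3 : ∀ w ∈ E.grading 0, j w = 0 := by
    intro w hw
    have h := (hΦdeg 0 w hw).2.1
    rw [hjw]
    exact (Submodule.mem_bot K).mp h
  have prop4 : ∀ w w' : E.W, E.d (j (w * w')) + j (E.d (w * w'))
      = (E.d (j w) + j (E.d w)) * w' + w * (E.d (j w') + j (E.d w')) := by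
    intro w w'
    have h := congrArg TT.c3 (map_mul Φ w w')
    rw [TT.mul_def, TT.c3_mk, hπ w, hπ w'] at h
    rw [← hLw, ← hLw, ← hLw]
    exact h
  have prop5 : ∀ a : A, j (E.ι a) = 0 := by
    intro a
    rw [hjw, hΦι a]
    rfl
  have prop6 : ∀ a : A, E.d (j (E.ι a)) + j (E.d (E.ι a)) = E.ι (D0 a) := by
    intro a
    rw [← hLw, hΦι a]
    rfl
  refine ⟨j, ⟨prop1, prop2, prop3, prop4, prop5, prop6⟩, ?_⟩
  rintro j' ⟨h1', h2', h3', h4', h5', h6'⟩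
  have hj'1 : j' (1 : E.W) = 0 := h3' 1 (SetLike.one_mem_graded _)
  have hM1 : E.d (j' (1 : E.W)) + j' (E.d (1 : E.W)) = 0 := by
    have h := h4' 1 1
    rw [one_mul, mul_one, one_mul] at h
    have h2 : (E.d (j' (1:E.W)) + j' (E.d (1:E.W))) + 0
        = (E.d (j' (1:E.W)) + j' (E.d (1:E.W))) + (E.d (j' (1:E.W)) + j' (E.d (1:E.W))) := by
      rw [add_zero]; exact h
    exact (add_left_cancel h2).symm
  rw [hj'1, map_zero, zero_add] at hM1
  let Φ' : E.W →ₐ[K] TT K E.W E.grading :=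
    { toFun := fun w => TT.mk w (j' w) (E.d (j' w) + j' (E.d w))
      map_one' := by
        rw [TT.one_def]
        apply TT.ext <;> simp [hj'1, hM1]
      map_mul' := fun w w' => by
        rw [TT.mul_def]
        apply TT.ext
        · simp
        · simp only [TT.c2_mk, TT.c1_mk]
          exact h1' w w'
        · simp only [TT.c3_mk, TT.c1_mk]
          exact h4' w w'
      map_zero' := by apply TT.ext <;> simp
      map_add' := fun w w' => by apply TT.ext <;> simp <;> abel
      commutes' := fun k => by
        rw [TT.algebraMap_def]
        apply TT.ext <;>
          simp [Algebra.algebraMap_eq_smul_one (A := E.W), map_smul, hj'1, hM1] }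
  have hΦ'w : ∀ w, Φ' w = TT.mk w (j' w) (E.d (j' w) + j' (E.d w)) := fun w => rfl
  have hkey : Φ' = Φ := by
    apply hΦuniq
    refine ⟨?_, ?_, ?_⟩
    · intro n w hw
      refine ⟨hw, ?_, ?_⟩
      · show j' w ∈ pre E.grading n
        cases n with
        | zero =>
          rw [h3' w hw]
          exact zero_mem _
        | succ m => exact h2' m w hw
      · show E.d (j' w) + j' (E.d w) ∈ E.grading n
        cases n with
        | zero =>
          rw [h3' w hw, map_zero, zero_add]
          exact h2' 0 (E.d w) (E.isGDA.d_mem 0 w hw)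
        | succ m =>
          exact add_mem (E.isGDA.d_mem m _ (h2' m w hw))
            (h2' (m + 1) _ (E.isGDA.d_mem (m + 1) w hw))
    · intro w
      rw [hΦ'w, hΦ'w, dT_apply]
      apply TT.ext
      · simp
      · simp only [TT.c2_mk, TT.c3_mk]
        abel
      · simp only [TT.c3_mk, TT.c2_mk]
        rw [E.isGDA.d_sq w, map_zero, add_zero, map_add, E.isGDA.d_sq (j' w), zero_add]
    · intro a
      rw [hΦ'w]
      show _ = TT.mk (E.ι a) 0 (E.ι (D0 a))
      rw [h6' a, h5' a]
  refine LinearMap.ext fun w => ?_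
  have := congrArg TT.c2 (DFunLike.congr_fun hkey w)
  rw [hΦ'w, TT.c2_mk] at this
  rw [this, hjw]

end Main

end S0

/-- Let `g` be a finite-dimensional Lie algebra over `K`, `A` a unital
associative `K`-algebra and `X ↦ L0 X` a Lie algebra homomorphism from `g` into the Lie
algebra of derivations of `A`.  Then there is a unique operation of `g` in the universal
differential calculus `Ω(A)` (the differential envelope `E` of `A`) such that
`L X (ι a) = ι (L0 X a)` for all `a ∈ A`, where `L X = i X ∘ d + d ∘ i X`. -/
theorem stmt0 (K : Type) [Field K] (g : Type) [LieRing g] [LieAlgebra K g]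
    [Module.Finite K g] (A : Type) [Ring A] [Algebra K A]
    (E : GDEnvelope K A (trivGrading K A))
    (L0 : g →ₗ[K] Module.End K A)
    (hL0der : ∀ (X : g) (a b : A), L0 X (a * b) = L0 X a * b + a * L0 X b)
    (hL0lie : ∀ X Y : g, L0 ⁅X, Y⁆ = ⁅L0 X, L0 Y⁆) :
    ∃! i : g →ₗ[K] Module.End K E.W,
      IsLieOperation K g E.W E.grading E.d i ∧
      ∀ (X : g) (a : A), i X (E.d (E.ι a)) + E.d (i X (E.ι a)) = E.ι (L0 X a) := by
  classical
  have hι0 : ∀ a : A, E.ι a ∈ E.grading 0 := fun a =>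
    E.ι_grading 0 a (by simp [trivGrading])
  have H : ∀ X : g, ∃! j : Module.End K E.W,
      (∀ w w' : E.W, j (w * w') = j w * w' + S0.eps E.grading w * j w') ∧
      (∀ n : ℕ, ∀ w ∈ E.grading (n + 1), j w ∈ E.grading n) ∧
      (∀ w ∈ E.grading 0, j w = 0) ∧
      (∀ w w' : E.W, E.d (j (w * w')) + j (E.d (w * w'))
          = (E.d (j w) + j (E.d w)) * w' + w * (E.d (j w') + j (E.d w'))) ∧
      (∀ a : A, j (E.ι a) = 0) ∧
      (∀ a : A, E.d (j (E.ι a)) + j (E.d (E.ι a)) = E.ι (L0 X a)) :=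
    fun X => S0.main E (L0 X) (hL0der X)
  let iF : g → Module.End K E.W := fun X => (H X).exists.choose
  have hiF := fun X : g => (H X).exists.choose_spec
  have huniq : ∀ (X : g) (j' : Module.End K E.W),
      ((∀ w w' : E.W, j' (w * w') = j' w * w' + S0.eps E.grading w * j' w') ∧
      (∀ n : ℕ, ∀ w ∈ E.grading (n + 1), j' w ∈ E.grading n) ∧
      (∀ w ∈ E.grading 0, j' w = 0) ∧
      (∀ w w' : E.W, E.d (j' (w * w')) + j' (E.d (w * w'))
          = (E.d (j' w) + j' (E.d w)) * w' + w * (E.d (j' w') + j' (E.d w'))) ∧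
      (∀ a : A, j' (E.ι a) = 0) ∧
      (∀ a : A, E.d (j' (E.ι a)) + j' (E.d (E.ι a)) = E.ι (L0 X a))) → j' = iF X :=
    fun X j' h' => (H X).unique h' (hiF X)
  have c1 : ∀ (X : g) (w w' : E.W),
      iF X (w * w') = iF X w * w' + S0.eps E.grading w * iF X w' :=
    fun X : g => (hiF X).1
  have c2 : ∀ (X : g) (n : ℕ), ∀ w ∈ E.grading (n + 1), iF X w ∈ E.grading n :=
    fun X : g => (hiF X).2.1
  have c3 : ∀ (X : g), ∀ w ∈ E.grading 0, iF X w = 0 :=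
    fun X : g => (hiF X).2.2.1
  have c4 : ∀ (X : g) (w w' : E.W), E.d (iF X (w * w')) + iF X (E.d (w * w'))
      = (E.d (iF X w) + iF X (E.d w)) * w' + w * (E.d (iF X w') + iF X (E.d w')) :=
    fun X : g => (hiF X).2.2.2.1
  have c5 : ∀ (X : g) (a : A), iF X (E.ι a) = 0 :=
    fun X : g => (hiF X).2.2.2.2.1
  have c6 : ∀ (X : g) (a : A), E.d (iF X (E.ι a)) + iF X (E.d (E.ι a)) = E.ι (L0 X a) :=
    fun X : g => (hiF X).2.2.2.2.2
  have shuffle : ∀ A B C D : E.W, A + B + (C + D) = A + C + (B + D) :=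
    fun A B C D => by abel
  have hadd : ∀ X Y : g, iF (X + Y) = iF X + iF Y := by
    intro X Y
    refine (huniq (X + Y) (iF X + iF Y) ⟨?_, ?_, ?_, ?_, ?_, ?_⟩).symm
    · intro w w'
      simp only [LinearMap.add_apply]
      rw [c1 X, c1 Y, mul_add, add_mul]
      abel
    · intro n w hw
      exact add_mem (c2 X n w hw) (c2 Y n w hw)
    · intro w hw
      simp only [LinearMap.add_apply]
      rw [c3 X w hw, c3 Y w hw, add_zero]
    · intro w w'
      simp only [LinearMap.add_apply, map_add]
      rw [shuffle, c4 X w w', c4 Y w w']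
      simp only [add_mul, mul_add]
      abel
    · intro a
      simp only [LinearMap.add_apply]
      rw [c5 X a, c5 Y a, add_zero]
    · intro a
      simp only [LinearMap.add_apply, map_add]
      rw [shuffle, c6 X a, c6 Y a]
  have hsmul : ∀ (c : K) (X : g), iF (c • X) = c • iF X := by
    intro c X
    refine (huniq (c • X) (c • iF X) ⟨?_, ?_, ?_, ?_, ?_, ?_⟩).symm
    · intro w w'
      simp only [LinearMap.smul_apply]
      rw [c1 X, smul_add, smul_mul_assoc, mul_smul_comm]
    · intro n w hw
      exact Submodule.smul_mem _ c (c2 X n w hw)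
    · intro w hw
      simp only [LinearMap.smul_apply]
      rw [c3 X w hw, smul_zero]
    · intro w w'
      simp only [LinearMap.smul_apply, map_smul]
      rw [← smul_add, c4 X w w', ← smul_add, ← smul_add, smul_mul_assoc, mul_smul_comm,
        smul_add]
    · intro a
      simp only [LinearMap.smul_apply]
      rw [c5 X a, smul_zero]
    · intro a
      simp only [LinearMap.smul_apply, map_smul]
      rw [← smul_add, c6 X a]
  let i : g →ₗ[K] Module.End K E.W :=
    { toFun := iF
      map_add' := hadd
      map_smul' := fun c X => hsmul c X }
  have hiX : ∀ X : g, i X = iF X := fun X => rfl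
  have hcartan : ∀ X Y : g,
      iF X * ((E.d : Module.End K E.W) * iF Y + iF Y * (E.d : Module.End K E.W))
        - ((E.d : Module.End K E.W) * iF Y + iF Y * (E.d : Module.End K E.W)) * iF X
      = iF ⁅X, Y⁆ := by
    intro X Y
    set LY : Module.End K E.W :=
      (E.d : Module.End K E.W) * iF Y + iF Y * (E.d : Module.End K E.W) with hLYdef
    set LX : Module.End K E.W :=
      (E.d : Module.End K E.W) * iF X + iF X * (E.d : Module.End K E.W) with hLXdef
    have hLYapp : ∀ w, LY w = E.d (iF Y w) + iF Y (E.d w) := fun w => rfl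
    have hLXapp : ∀ w, LX w = E.d (iF X w) + iF X (E.d w) := fun w => rfl
    have hLmem : ∀ n, ∀ w ∈ E.grading n, LY w ∈ E.grading n := by
      intro n w hw
      rw [hLYapp]
      cases n with
      | zero =>
        rw [c3 Y w hw, map_zero, zero_add]
        exact c2 Y 0 (E.d w) (E.isGDA.d_mem 0 w hw)
      | succ m =>
        exact add_mem (E.isGDA.d_mem m _ (c2 Y m w hw))
          (c2 Y (m + 1) _ (E.isGDA.d_mem (m + 1) w hw))
    have hLYder : ∀ w w', LY (w * w') = LY w * w' + w * LY w' := by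
      intro w w'
      rw [hLYapp, hLYapp, hLYapp]
      exact c4 Y w w'
    have hLXder : ∀ w w', LX (w * w') = LX w * w' + w * LX w' := by
      intro w w'
      rw [hLXapp, hLXapp, hLXapp]
      exact c4 X w w'
    have hepsL : ∀ w, S0.eps E.grading (LY w) = LY (S0.eps E.grading w) :=
      S0.eps_commute E.grading LY hLmem
    have hdLY : ∀ w, E.d (LY w) = LY (E.d w) := by
      intro w
      rw [hLYapp, hLYapp, map_add, E.isGDA.d_sq (iF Y w), zero_add, E.isGDA.d_sq w,
        map_zero, add_zero]
    have hLYι : ∀ b : A, LY (E.ι b) = E.ι (L0 Y b) := by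
      intro b
      rw [hLYapp]
      exact c6 Y b
    have hLXι : ∀ b : A, LX (E.ι b) = E.ι (L0 X b) := by
      intro b
      rw [hLXapp]
      exact c6 X b
    set jc : Module.End K E.W := iF X * LY - LY * iF X with hjcdef
    have hjcapp : ∀ w, jc w = iF X (LY w) - LY (iF X w) := fun w => rfl
    have hMc : ∀ w, E.d (jc w) + jc (E.d w) = LX (LY w) - LY (LX w) := by
      intro w
      rw [hjcapp, hjcapp, map_sub, ← hdLY w, hdLY (iF X w)]
      rw [hLXapp (LY w), hLXapp w, map_add LY]
      abel
    have hcond : jc = iF ⁅X, Y⁆ := by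
      apply huniq
      refine ⟨?_, ?_, ?_, ?_, ?_, ?_⟩
      · intro w w'
        rw [hjcapp (w * w'), hjcapp w, hjcapp w', hLYder w w', map_add,
          c1 X (LY w) w', c1 X w (LY w'), c1 X w w', map_add, hLYder (iF X w) w',
          hLYder (S0.eps E.grading w) (iF X w'), hepsL w]
        simp only [sub_mul, mul_sub]
        abel
      · intro n w hw
        rw [hjcapp]
        exact sub_mem (c2 X n _ (hLmem (n + 1) w hw)) (hLmem n _ (c2 X n w hw))
      · intro w hw
        rw [hjcapp, c3 X _ (hLmem 0 w hw), c3 X w hw, map_zero, sub_zero]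
      · intro w w'
        rw [hMc (w * w'), hMc w, hMc w', hLYder w w', map_add, hLXder (LY w) w',
          hLXder w (LY w'), hLXder w w', map_add, hLYder (LX w) w', hLYder w (LX w')]
        simp only [sub_mul, mul_sub]
        abel
      · intro a
        rw [hjcapp, hLYι a, c5 X _, c5 X a, map_zero, sub_zero]
      · intro a
        rw [hMc (E.ι a), hLYι a, hLXι a, hLXι (L0 Y a), hLYι (L0 X a), hL0lie X Y,
          Ring.lie_def, LinearMap.sub_apply, Module.End.mul_apply, Module.End.mul_apply,
          map_sub]
    exact hcond
  refine ⟨i, ⟨⟨fun X n a ha => c2 X n a ha, fun X a ha => c3 X a ha, ?_, ?_⟩, ?_⟩, ?_⟩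
  · intro X n a b ha
    rw [hiX, c1 X a b, S0.eps_of_mem E.grading ha, smul_mul_assoc]
  · intro X Y
    exact hcartan X Y
  · intro X a
    rw [hiX, add_comm]
    exact c6 X a
  · rintro i' ⟨hop, hcond⟩
    refine LinearMap.ext fun X => ?_
    rw [hiX]
    apply huniq X (i' X)
    refine ⟨S0.antider_global E.grading (i' X) (hop.antider X), hop.i_mem X,
      hop.i_deg0 X, S0.der_global E.grading E.isGDA (i' X) (hop.antider X)
        (hop.i_mem X) (hop.i_deg0 X), fun a => hop.i_deg0 X (E.ι a) (hι0 a), fun a => ?_⟩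
    rw [add_comm]
    exact hcond X a
end

section
/- Let Ω be a graded differential algebra carrying an operation of a finite-dimensional Lie algebra g. Then for every X ∈ g and all Y_1, …, Y_n ∈ g one has the shuffle identity i_X L_{Y_1} ⋯ L_{Y_n} = Σ_{p=0}^{n} Σ_{(i,j) ∈ (p, n−p)-shuffles} L_{Y_{i_1}} ⋯ L_{Y_{i_p}} i_{[[…[X, Y_{j_1}], …], Y_{j_{n−p}}]}, where the inner sum is over all (p, n−p)-shuffles of {1, …, n} with i_1 < ⋯ < i_p and j_1 < ⋯ < j_{n−p}. -/
open scoped TensorProduct DirectSum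

private lemma castSucc_mem_map {n : ℕ} (s : Finset (Fin n)) (y : Fin n) :
    y.castSucc ∈ s.map Fin.castSuccEmb ↔ y ∈ s := by
  simp only [Finset.mem_map]
  constructor
  · rintro ⟨z, hz, hzy⟩
    rwa [show z = y from Fin.castSucc_injective _ hzy] at hz
  · exact fun h => ⟨y, h, rfl⟩

private lemma not_last_mem_map {n : ℕ} (s : Finset (Fin n)) :
    Fin.last n ∉ s.map Fin.castSuccEmb := by
  simp only [Finset.mem_map, not_exists]
  rintro x ⟨-, hx⟩
  exact absurd hx (Fin.castSucc_lt_last x).ne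

private lemma sort_map_castSucc {n : ℕ} (s : Finset (Fin n)) :
    (s.map Fin.castSuccEmb).sort (· ≤ ·) = (s.sort (· ≤ ·)).map Fin.castSucc := by
  refine (fun hp h2 => List.Perm.eq_of_pairwise' (Finset.pairwise_sort _ _) h2 hp) ?_ ?_
  · rw [← Multiset.coe_eq_coe, ← Multiset.map_coe, Finset.sort_eq, Finset.sort_eq,
      Finset.map_val]
    rfl
  · exact List.Pairwise.map _ (fun a b h => Fin.castSucc_le_castSucc_iff.mpr h)
      (Finset.pairwise_sort _ _)

private lemma sort_insert_last {n : ℕ} (s : Finset (Fin n)) :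
    ((insert (Fin.last n) (s.map Fin.castSuccEmb)).sort (· ≤ ·))
      = ((s.sort (· ≤ ·)).map Fin.castSucc) ++ [Fin.last n] := by
  refine (fun hp h2 => List.Perm.eq_of_pairwise' (Finset.pairwise_sort _ _) h2 hp) ?_ ?_
  · have hv : (s.map Fin.castSuccEmb).val
        = (((s.sort (· ≤ ·)).map Fin.castSucc : List (Fin (n+1))) : Multiset (Fin (n+1))) := by
      rw [← sort_map_castSucc, Finset.sort_eq]
    rw [← Multiset.coe_eq_coe, Finset.sort_eq,
      Finset.insert_val_of_notMem (not_last_mem_map s), hv, Multiset.cons_coe,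
      Multiset.coe_eq_coe]
    exact (List.perm_append_singleton _ _).symm
  · show List.Pairwise _ _
    rw [List.pairwise_append]
    refine ⟨List.Pairwise.map _ (fun a b h => Fin.castSucc_le_castSucc_iff.mpr h)
      (Finset.pairwise_sort _ _), List.pairwise_singleton _ _, ?_⟩
    rintro x hx y hy
    simp only [List.mem_singleton] at hy
    subst hy
    simp only [List.mem_map] at hx
    obtain ⟨z, -, rfl⟩ := hx
    exact Fin.le_last _

private lemma compl_map {n : ℕ} (s : Finset (Fin n)) :
    (s.map Fin.castSuccEmb)ᶜ = insert (Fin.last n) (sᶜ.map Fin.castSuccEmb) := by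
  ext x
  induction x using Fin.lastCases with
  | last =>
      have h1 := not_last_mem_map s
      have h2 : Fin.last n ∈ insert (Fin.last n) (sᶜ.map Fin.castSuccEmb) :=
        Finset.mem_insert_self _ _
      simp [Finset.mem_compl, h1, h2]
  | cast y =>
      rw [Finset.mem_compl, Finset.mem_insert, castSucc_mem_map, castSucc_mem_map,
        Finset.mem_compl]
      simp [(Fin.castSucc_lt_last y).ne]

private lemma compl_insert_last {n : ℕ} (s : Finset (Fin n)) :
    (insert (Fin.last n) (s.map Fin.castSuccEmb))ᶜ = sᶜ.map Fin.castSuccEmb := by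
  ext x
  induction x using Fin.lastCases with
  | last =>
      have h1 := not_last_mem_map sᶜ
      have h2 : Fin.last n ∈ insert (Fin.last n) (s.map Fin.castSuccEmb) :=
        Finset.mem_insert_self _ _
      simp [Finset.mem_compl, h1, h2]
  | cast y =>
      rw [Finset.mem_compl, Finset.mem_insert, castSucc_mem_map, castSucc_mem_map,
        Finset.mem_compl]
      simp [(Fin.castSucc_lt_last y).ne]

private lemma shuffle_aux {R : Type} [Ring R] {g : Type} [LieRing g]
    (i L : g → R) (h : ∀ Z W : g, i Z * L W = L W * i Z + i ⁅Z, W⁆) :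
    ∀ (n : ℕ) (X : g) (Y : Fin n → g),
      i X * (List.ofFn fun k => L (Y k)).prod
        = ∑ s : Finset (Fin n),
            ((s.sort (· ≤ ·)).map fun k => L (Y k)).prod
              * i ((((sᶜ).sort (· ≤ ·)).map Y).foldl (fun Z W => ⁅Z, W⁆) X)
  | 0, X, Y => by
    simp only [List.ofFn_zero, List.prod_nil, mul_one, Finset.univ_unique,
      Finset.sum_singleton]
    rw [Finset.eq_empty_of_isEmpty (default : Finset (Fin 0)),
      Finset.eq_empty_of_isEmpty ((∅ : Finset (Fin 0))ᶜ)]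
    simp
  | (n+1), X, Y => by
    -- the reindexing bijection
    set e : Finset (Fin n) × Bool → Finset (Fin (n+1)) := fun p =>
      if p.2 then insert (Fin.last n) (p.1.map Fin.castSuccEmb)
      else p.1.map Fin.castSuccEmb with he
    have hinj : Function.Injective e := by
      rintro ⟨t, b⟩ ⟨t', b'⟩ hE
      have hmem : ∀ (u : Finset (Fin n)) (c : Bool),
          (Fin.last n ∈ e (u, c)) ↔ c = true := by
        rintro u (_|_) <;>
          simp [he, not_last_mem_map u, Finset.mem_insert_self]
      have hb : b = b' := by
        have h1 : (b = true) ↔ (b' = true) := by rw [← hmem t b, ← hmem t' b', hE]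
        cases b <;> cases b' <;> simp_all
      subst hb
      cases b with
      | false =>
          simp only [he, if_neg Bool.false_ne_true] at hE
          exact Prod.ext (Finset.map_injective _ hE) rfl
      | true =>
          simp only [he, if_pos rfl] at hE
          have := congrArg (fun u => Finset.erase u (Fin.last n)) hE
          simp only [Finset.erase_insert (not_last_mem_map t),
            Finset.erase_insert (not_last_mem_map t')] at this
          exact Prod.ext (Finset.map_injective _ this) rfl
    have hbij : Function.Bijective e := by
      rw [Fintype.bijective_iff_injective_and_card]
      refine ⟨hinj, ?_⟩
      simp [Fintype.card_finset, pow_succ]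
    have hsum : ∀ F : Finset (Fin (n+1)) → R,
        (∑ s : Finset (Fin (n+1)), F s)
          = ∑ t : Finset (Fin n),
              (F (insert (Fin.last n) (t.map Fin.castSuccEmb)) + F (t.map Fin.castSuccEmb)) := by
      intro F
      rw [← Fintype.sum_bijective e hbij (fun p => F (e p)) F (fun p => rfl)]
      rw [Fintype.sum_prod_type]
      refine Finset.sum_congr rfl fun t _ => ?_
      rw [Fintype.sum_bool]
      simp [he]
    rw [hsum]
    rw [List.ofFn_succ', List.prod_concat, ← mul_assoc,
      shuffle_aux i L h n X (fun k => Y k.castSucc), Finset.sum_mul]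
    refine Finset.sum_congr rfl fun t _ => ?_
    -- compute the two right-hand terms
    have hprod : ((t.sort (· ≤ ·)).map Fin.castSucc).map (fun k => L (Y k))
        = (t.sort (· ≤ ·)).map fun k => L (Y k.castSucc) := by
      rw [List.map_map]; rfl
    have hfold : ∀ u : Finset (Fin n),
        ((u.sort (· ≤ ·)).map Fin.castSucc).map Y
          = (u.sort (· ≤ ·)).map fun k => Y k.castSucc := by
      intro u; rw [List.map_map]; rfl
    have hT : (((insert (Fin.last n) (t.map Fin.castSuccEmb)).sort (· ≤ ·)).map
          fun k => L (Y k)).prod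
        * i (((((insert (Fin.last n) (t.map Fin.castSuccEmb))ᶜ).sort (· ≤ ·)).map Y).foldl
            (fun Z W => ⁅Z, W⁆) X)
        = (((t.sort (· ≤ ·)).map fun k => L (Y k.castSucc)).prod * L (Y (Fin.last n)))
          * i ((((tᶜ).sort (· ≤ ·)).map fun k => Y k.castSucc).foldl (fun Z W => ⁅Z, W⁆) X) := by
      rw [sort_insert_last, List.map_append, hprod, List.map_singleton, List.prod_append,
        List.prod_singleton, compl_insert_last, sort_map_castSucc, hfold]
    have hF : (((t.map Fin.castSuccEmb).sort (· ≤ ·)).map fun k => L (Y k)).prod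
        * i (((((t.map Fin.castSuccEmb)ᶜ).sort (· ≤ ·)).map Y).foldl (fun Z W => ⁅Z, W⁆) X)
        = ((t.sort (· ≤ ·)).map fun k => L (Y k.castSucc)).prod
          * i ⁅(((tᶜ).sort (· ≤ ·)).map fun k => Y k.castSucc).foldl (fun Z W => ⁅Z, W⁆) X,
              Y (Fin.last n)⁆ := by
      rw [sort_map_castSucc, hprod, compl_map, sort_insert_last, List.map_append, hfold,
        List.foldl_append, List.map_singleton, List.foldl_cons, List.foldl_nil]
    rw [hT, hF]
    set A := ((t.sort (· ≤ ·)).map fun k => L (Y k.castSucc)).prod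
    set c := (((tᶜ).sort (· ≤ ·)).map fun k => Y k.castSucc).foldl (fun Z W => ⁅Z, W⁆) X
    rw [mul_assoc A (i c) _, h c (Y (Fin.last n)), mul_add, ← mul_assoc]

/-- Let `Ω` be a graded differential algebra carrying an operation of a
finite-dimensional Lie algebra `g`.  Then for every `X ∈ g` and `Y₁, …, Yₙ ∈ g` one has
the shuffle identity
`i_X L_{Y₁} ⋯ L_{Yₙ} = Σₚ Σ_{(p,n-p)-shuffles} L_{Y_{i₁}} ⋯ L_{Y_{iₚ}} i_{[[…[X,Y_{j₁}],…],Y_{j_{n-p}}]}`.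
A `(p, n-p)`-shuffle `(i₁ < ⋯ < iₚ ; j₁ < ⋯ < j_{n-p})` of `{1, …, n}` is encoded as a
subset `s` of `Fin n` (of cardinality `p`, with increasing enumeration `i₁ < ⋯ < iₚ`)
together with its complement (with increasing enumeration `j₁ < ⋯ < j_{n-p}`); the sum
over `p` of the sums over `(p, n-p)`-shuffles is the sum over all such subsets `s`. -/
theorem stmt4 (K : Type) [Field K] (g : Type) [LieRing g] [LieAlgebra K g]
    [Module.Finite K g]
    (Ω : Type) [Ring Ω] [Algebra K Ω] (𝒜 : ℕ → Submodule K Ω) [GradedAlgebra 𝒜]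
    (d : Ω →ₗ[K] Ω) (hΩ : IsGDA K Ω 𝒜 d)
    (i : g →ₗ[K] Module.End K Ω) (hi : IsLieOperation K g Ω 𝒜 d i)
    (n : ℕ) (X : g) (Y : Fin n → g) :
    (letI L : g → Module.End K Ω :=
      fun Z => (d : Module.End K Ω) * i Z + i Z * (d : Module.End K Ω)
    i X * (List.ofFn fun k => L (Y k)).prod
      = ∑ s : Finset (Fin n),
          ((s.sort (· ≤ ·)).map fun k => L (Y k)).prod
            * i ((((sᶜ).sort (· ≤ ·)).map Y).foldl (fun Z W => ⁅Z, W⁆) X)) := by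
  have hcomm : ∀ Z W : g,
      i Z * ((d : Module.End K Ω) * i W + i W * (d : Module.End K Ω))
        = ((d : Module.End K Ω) * i W + i W * (d : Module.End K Ω)) * i Z + i ⁅Z, W⁆ := by
    intro Z W
    have hc := hi.cartan Z W
    rw [sub_eq_iff_eq_add] at hc
    rw [hc, add_comm]
  exact shuffle_aux (fun Z => i Z)
    (fun Z => (d : Module.End K Ω) * i Z + i Z * (d : Module.End K Ω)) hcomm n X Y
end
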